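/- Let r ≥ 1 and h ≥ 1 be integers, let K = diag(k₁, …, k_r) ∈ M_r(ℂ) with k_i ≠ k_j for all i ≠ j, and let (L_n)_{n ≥ −h} be an arbitrary sequence in M_r(ℂ) with L_{−h} = K. Then there exists a unique pair of sequences ((ξ_n)_{n ≥ 1}, (K_n)_{n ≥ −h+1}) such that each ξ_n ∈ M_r(ℂ) has all diagonal entries equal to zero, each K_n is a diagonal matrix, and, setting ξ₀ := 1 (the identity matrix) and K_{−h} := K, for every integer n > −h the equation [n ξ_n, included only when n ≥ 1] + Σ_{s=0}^{n+h} ξ_s K_{n−s} = Σ_{s=0}^{n+h} L_{n−s} ξ_s holds in M_r(ℂ). (These are exactly the coefficient equations obtained by substituting the formal series ψ = (Σ_{s≥0} ξ_s w^s)·exp(Σ_n K_n ∫ w^{n−1} dw) into the formal ODE dψ/dw = (Σ_{n ≥ −h} L_n w^{n−1})ψ; this is the paper's Lemma 3.1 at an irregular singular point of order h+1, in the frame where the leading coefficient is already diagonal.) -/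

import Mathlib

open Matrix Finset

namespace Stmt4

variable {r : ℕ} (k : Fin r → ℂ)

noncomputable def Kd (C : Matrix (Fin r) (Fin r) ℂ) : Matrix (Fin r) (Fin r) ℂ :=
  Matrix.diagonal (fun i => C i i)

noncomputable def Xi (C : Matrix (Fin r) (Fin r) ℂ) : Matrix (Fin r) (Fin r) ℂ :=
  Matrix.of fun i j => if i = j then 0 else C i j / (k j - k i)

lemma key (hk : ∀ i j : Fin r, i ≠ j → k i ≠ k j) (C : Matrix (Fin r) (Fin r) ℂ) :
    Kd C + Xi k C * Matrix.diagonal k - Matrix.diagonal k * Xi k C = C := by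
  ext i j
  by_cases hij : i = j
  · subst hij
    simp [Kd, Xi, Matrix.mul_diagonal, Matrix.diagonal_mul]
  · have hne : k j - k i ≠ 0 := sub_ne_zero.mpr (hk j i (Ne.symm hij))
    simp [Kd, Xi, Matrix.mul_diagonal, Matrix.diagonal_mul, hij,
      Matrix.diagonal_apply_ne _ hij]
    field_simp

lemma key_unique (hk : ∀ i j : Fin r, i ≠ j → k i ≠ k j) (C K' ξ : Matrix (Fin r) (Fin r) ℂ) (hK' : K'.IsDiag)
    (hξ : ∀ i, ξ i i = 0)
    (heq : K' + ξ * Matrix.diagonal k - Matrix.diagonal k * ξ = C) :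
    K' = Kd C ∧ ξ = Xi k C := by
  constructor
  · ext i j
    by_cases hij : i = j
    · subst hij
      have := congrFun (congrFun heq i) i
      simp [Matrix.mul_diagonal, Matrix.diagonal_mul, hξ i] at this
      simpa [Kd] using this
    · simp [Kd, Matrix.diagonal_apply_ne _ hij, hK' hij]
  · ext i j
    by_cases hij : i = j
    · subst hij; simp [Xi, hξ i]
    · have hne : k j - k i ≠ 0 := sub_ne_zero.mpr (hk j i (Ne.symm hij))
      have h2 := congrFun (congrFun heq i) j
      simp [Matrix.mul_diagonal, Matrix.diagonal_mul, hK' hij] at h2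
      simp only [Xi, Matrix.of_apply, hij, if_false]
      rw [eq_div_iff hne]
      linear_combination h2

noncomputable def Cfun (h : ℕ) (L : ℕ → Matrix (Fin r) (Fin r) ℂ)
    (q : ℕ → Matrix (Fin r) (Fin r) ℂ × Matrix (Fin r) (Fin r) ℂ) (m : ℕ) :
    Matrix (Fin r) (Fin r) ℂ :=
  L m - (if h + 1 ≤ m then ((m - h : ℕ) : ℂ) • (q (m - h)).1 else 0)
    + ∑ s ∈ Finset.Ico 1 m, (L (m - s) * (q s).1 - (q s).1 * (q (m - s)).2)

noncomputable def f (h : ℕ) (hh : 1 ≤ h) (L : ℕ → Matrix (Fin r) (Fin r) ℂ) :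
    ℕ → Matrix (Fin r) (Fin r) ℂ × Matrix (Fin r) (Fin r) ℂ
  | 0 => (1, Matrix.diagonal k)
  | (m + 1) =>
    let C := L (m + 1)
      - (if h + 1 ≤ m + 1 then ((m + 1 - h : ℕ) : ℂ) • (f h hh L (m + 1 - h)).1 else 0)
      + ∑ s ∈ (Finset.Ico 1 (m + 1)).attach,
          (L (m + 1 - s.1) * (f h hh L s.1).1 - (f h hh L s.1).1 * (f h hh L (m + 1 - s.1)).2)
    (Xi k C, Kd C)
  termination_by m => m
  decreasing_by
    all_goals first
      | omega
      | (have := Finset.mem_Ico.mp s.2; omega)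

lemma f_zero (h : ℕ) (hh : 1 ≤ h) (L) : f k h hh L 0 = (1, Matrix.diagonal k) := by
  simp [f]

lemma f_succ (h : ℕ) (hh : 1 ≤ h) (L) (m : ℕ) :
    f k h hh L (m + 1) = (Xi k (Cfun h L (f k h hh L) (m + 1)),
      Kd (Cfun h L (f k h hh L) (m + 1))) := by
  rw [f.eq_2, Cfun, Finset.sum_attach (Finset.Ico 1 (m+1))
    (fun s => L (m + 1 - s) * (f k h hh L s).1 - (f k h hh L s).1 * (f k h hh L (m + 1 - s)).2)]

lemma eq_iff (h : ℕ) (L : ℕ → Matrix (Fin r) (Fin r) ℂ)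
    (hL0 : L 0 = Matrix.diagonal k)
    (ξ K : ℕ → Matrix (Fin r) (Fin r) ℂ) (hξ0 : ξ 0 = 1) (hK0 : K 0 = Matrix.diagonal k)
    (m : ℕ) (hm : 1 ≤ m) :
    ((if h + 1 ≤ m then (((m - h : ℕ) : ℂ) • ξ (m - h)) else 0)
        + ∑ s ∈ Finset.range (m + 1), ξ s * K (m - s)
        = ∑ s ∈ Finset.range (m + 1), L (m - s) * ξ s)
    ↔ K m + ξ m * Matrix.diagonal k - Matrix.diagonal k * ξ m
        = Cfun h L (fun n => (ξ n, K n)) m := by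
  have h0m : 0 < m := hm
  have e1 : ∑ s ∈ Finset.range (m + 1), ξ s * K (m - s)
      = K m + (∑ s ∈ Finset.Ico 1 m, ξ s * K (m - s)) + ξ m * Matrix.diagonal k := by
    rw [Finset.sum_range_succ, Finset.range_eq_Ico,
      Finset.sum_eq_sum_Ico_succ_bot h0m]
    simp [hξ0, hK0, Nat.sub_self]
  have e2 : ∑ s ∈ Finset.range (m + 1), L (m - s) * ξ s
      = L m + (∑ s ∈ Finset.Ico 1 m, L (m - s) * ξ s) + Matrix.diagonal k * ξ m := by
    rw [Finset.sum_range_succ, Finset.range_eq_Ico,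
      Finset.sum_eq_sum_Ico_succ_bot h0m]
    simp [hξ0, hL0, Nat.sub_self]
  have hC : Cfun h L (fun n => (ξ n, K n)) m
      = L m - (if h + 1 ≤ m then (((m - h : ℕ) : ℂ) • ξ (m - h)) else 0)
        + (∑ s ∈ Finset.Ico 1 m, L (m - s) * ξ s
            - ∑ s ∈ Finset.Ico 1 m, ξ s * K (m - s)) := by
    rw [Cfun, Finset.sum_sub_distrib]
  rw [e1, e2, hC]
  generalize (if h + 1 ≤ m then (((m - h : ℕ) : ℂ) • ξ (m - h)) else 0) = T
  constructor <;> intro H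
  · rw [← sub_eq_zero] at H ⊢
    rw [← H]
    abel
  · rw [← sub_eq_zero] at H ⊢
    rw [← H]
    abel

lemma Cfun_congr (h : ℕ) (hh : 1 ≤ h) (L : ℕ → Matrix (Fin r) (Fin r) ℂ)
    (q q' : ℕ → Matrix (Fin r) (Fin r) ℂ × Matrix (Fin r) (Fin r) ℂ) (m : ℕ)
    (hq : ∀ n < m, q n = q' n) : Cfun h L q m = Cfun h L q' m := by
  unfold Cfun
  congr 1
  · congr 1
    split_ifs with hif
    · rw [hq _ (by omega)]
    · rfl
  · exact Finset.sum_congr rfl fun s hs => by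
      have := Finset.mem_Ico.mp hs
      rw [hq s (by omega), hq (m - s) (by omega)]

end Stmt4


/-- Paper's Lemma 3.1 at an irregular singularity of order `h+1` (diagonal frame), with
all indices shifted by `h` so that sequences are indexed by `ℕ`: the sequence `m ↦ L m`
represents `(L_{m−h})_{m≥0}` (so `L 0 = L_{−h} = K`), `p.1 n` represents `ξ_n` (with
`ξ₀ = 1`), and `p.2 m` represents `K_{m−h}` (with `p.2 0 = K`). For each `m ≥ 1`
(i.e. `n = m − h > −h`) the coefficient equation
`[n ξ_n when n ≥ 1] + Σ_{s=0}^{n+h} ξ_s K_{n−s} = Σ_{s=0}^{n+h} L_{n−s} ξ_s` holds, and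
the pair of sequences `(ξ, K)` with zero-diagonal `ξ_n` and diagonal `K_n` is unique. -/
theorem stmt_4 (r h : ℕ) (hr : 1 ≤ r) (hh : 1 ≤ h)
    (k : Fin r → ℂ) (hk : ∀ i j, i ≠ j → k i ≠ k j)
    (L : ℕ → Matrix (Fin r) (Fin r) ℂ)
    (hL0 : L 0 = Matrix.diagonal k) :
    ∃! p : (ℕ → Matrix (Fin r) (Fin r) ℂ) × (ℕ → Matrix (Fin r) (Fin r) ℂ),
      p.1 0 = 1 ∧
      (∀ n, 1 ≤ n → ∀ i, p.1 n i i = 0) ∧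
      p.2 0 = Matrix.diagonal k ∧
      (∀ m, 1 ≤ m → (p.2 m).IsDiag) ∧
      (∀ m, 1 ≤ m →
        (if h + 1 ≤ m then (((m - h : ℕ) : ℂ) • p.1 (m - h)) else 0)
          + ∑ s ∈ Finset.range (m + 1), p.1 s * p.2 (m - s)
          = ∑ s ∈ Finset.range (m + 1), L (m - s) * p.1 s) := by
  classical
  set F := Stmt4.f k h hh L with hF
  have hF0 : F 0 = (1, Matrix.diagonal k) := Stmt4.f_zero k h hh L
  have hFs : ∀ m : ℕ, 1 ≤ m →
      F m = (Stmt4.Xi k (Stmt4.Cfun h L F m), Stmt4.Kd (Stmt4.Cfun h L F m)) := by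
    intro m hm
    obtain ⟨m', rfl⟩ : ∃ m', m = m' + 1 := ⟨m - 1, by omega⟩
    exact Stmt4.f_succ k h hh L m'
  refine ⟨(fun m => (F m).1, fun m => (F m).2), ⟨?_, ?_, ?_, ?_, ?_⟩, ?_⟩
  · simp [hF0]
  · intro n hn i
    show (F n).1 i i = 0
    rw [hFs n hn]
    simp [Stmt4.Xi]
  · simp [hF0]
  · intro m hm
    show ((F m).2).IsDiag
    rw [hFs m hm]
    exact Matrix.isDiag_diagonal _
  · intro m hm
    refine (Stmt4.eq_iff k h L hL0 (fun n => (F n).1) (fun n => (F n).2)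
      (by simp [hF0]) (by simp [hF0]) m hm).mpr ?_
    show (F m).2 + (F m).1 * Matrix.diagonal k - Matrix.diagonal k * (F m).1
      = Stmt4.Cfun h L F m
    rw [hFs m hm]
    exact Stmt4.key k hk _
  · rintro q ⟨hq1, hq2, hq3, hq4, hq5⟩
    have main : ∀ m : ℕ, q.1 m = (F m).1 ∧ q.2 m = (F m).2 := by
      intro m
      induction m using Nat.strong_induction_on with
      | _ m ih =>
        match m with
        | 0 => rw [hF0]; exact ⟨hq1, hq3⟩
        | (m + 1) =>
          have hm1 : 1 ≤ m + 1 := by omega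
          have hCeq : Stmt4.Cfun h L (fun n => (q.1 n, q.2 n)) (m + 1)
              = Stmt4.Cfun h L F (m + 1) := by
            refine Stmt4.Cfun_congr h hh L _ _ _ ?_
            intro n hn
            obtain ⟨h1, h2⟩ := ih n hn
            simp [h1, h2]
          have heq := (Stmt4.eq_iff k h L hL0 q.1 q.2 hq1 hq3 (m + 1) hm1).mp
            (hq5 (m + 1) hm1)
          rw [hCeq] at heq
          obtain ⟨hK', hξ'⟩ := Stmt4.key_unique k hk _ _ _ (hq4 (m + 1) hm1)
            (fun i => hq2 (m + 1) hm1 i) heq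
          rw [hFs (m + 1) hm1]
          exact ⟨hξ', hK'⟩
    refine Prod.ext ?_ ?_ <;> funext m
    · exact (main m).1
    · exact (main m).2
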